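/- For 2 ≤ r < s, the {r,s}-leaper graph on a (2s)×n board (any n) has no Hamiltonian circuit. -/

import Mathlib

/-- The `{r,s}`-leaper graph on an `m × n` board: vertices are the cells
`(x,y)` with `0 ≤ x < m`, `0 ≤ y < n`, and two cells are adjacent when
their absolute coordinate differences are `{r, s}`. -/
def leaperGraph (r s m n : ℕ) : SimpleGraph (Fin m × Fin n) :=
  SimpleGraph.fromRel fun p q =>
    (Nat.dist p.1.val q.1.val = r ∧ Nat.dist p.2.val q.2.val = s) ∨
    (Nat.dist p.1.val q.1.val = s ∧ Nat.dist p.2.val q.2.val = r)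

/-- A graph has a Hamiltonian circuit. -/
def HasHamCycle {V : Type*} [DecidableEq V] (G : SimpleGraph V) : Prop :=
  ∃ (v : V) (w : G.Walk v v), w.IsHamiltonianCycle

/-! ### Auxiliary definitions and lemmas -/

/-- The set of "marked" columns on a board of width `2s`: a column `x < s`
is marked when `⌊x/r⌋` is even, and a column `x ≥ s` is marked when
`⌊(x-s)/r⌋` is odd. -/
def acol (r s x : ℕ) : Prop :=
  if x < s then x / r % 2 = 0 else (x - s) / r % 2 = 1

instance (r s x : ℕ) : Decidable (acol r s x) := by
  unfold acol; infer_instance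

lemma acol_not_both {r s : ℕ} (hr : 1 ≤ r) (hrs : r < s) {x y : ℕ}
    (hy : y < 2 * s) (hd : y = x + r ∨ y = x + s)
    (hax : acol r s x) (hay : acol r s y) : False := by
  rcases hd with h | h
  · subst h
    by_cases h1 : x < s
    · by_cases h2 : x + r < s
      · rw [acol, if_pos h1] at hax
        rw [acol, if_pos h2, Nat.add_div_right x hr] at hay
        omega
      · rw [acol, if_neg h2] at hay
        have hlt : x + r - s < r := by omega
        rw [Nat.div_eq_of_lt hlt] at hay
        omega
    · have h2 : ¬ x + r < s := by omega
      rw [acol, if_neg h1] at hax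
      rw [acol, if_neg h2] at hay
      have : x + r - s = (x - s) + r := by omega
      rw [this, Nat.add_div_right _ hr] at hay
      omega
  · subst h
    have h1 : x < s := by omega
    have h2 : ¬ x + s < s := by omega
    rw [acol, if_pos h1] at hax
    rw [acol, if_neg h2, Nat.add_sub_cancel] at hay
    omega

lemma acol_not_dist {r s : ℕ} (hr : 1 ≤ r) (hrs : r < s) {x y : ℕ}
    (hx : x < 2 * s) (hy : y < 2 * s)
    (hd : Nat.dist x y = r ∨ Nat.dist x y = s)
    (hax : acol r s x) (hay : acol r s y) : False := by
  have hdd : Nat.dist x y = (x - y) + (y - x) := rfl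
  rcases le_total x y with h | h
  · exact acol_not_both hr hrs hy (by omega) hax hay
  · exact acol_not_both hr hrs hx (by omega) hay hax

lemma sum_acol {r s : ℕ} :
    ∑ x ∈ Finset.range (2 * s), (if acol r s x then 1 else 0 : ℕ) = s := by
  rw [two_mul, Finset.sum_range_add, ← Finset.sum_add_distrib]
  have key : ∀ x ∈ Finset.range s,
      ((if acol r s x then 1 else 0 : ℕ) + (if acol r s (s + x) then 1 else 0)) = 1 := by
    intro x hx
    rw [Finset.mem_range] at hx
    have h1 : acol r s x ↔ x / r % 2 = 0 := by rw [acol, if_pos hx]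
    have h2 : acol r s (s + x) ↔ x / r % 2 = 1 := by
      rw [acol, if_neg (by omega), Nat.add_sub_cancel_left]
    rcases Nat.mod_two_eq_zero_or_one (x / r) with h | h
    · rw [if_pos (h1.mpr h), if_neg (by rw [h2]; omega)]
    · rw [if_neg (by rw [h1]; omega), if_pos (h2.mpr h)]
  rw [Finset.sum_congr rfl key, Finset.sum_const, Finset.card_range, smul_eq_mul, mul_one]

lemma list_sum_map_add {α : Type*} (f g : α → ℕ) :
    ∀ l : List α, (l.map (fun x => f x + g x)).sum = (l.map f).sum + (l.map g).sum := by
  intro l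
  induction l with
  | nil => simp
  | cons a l ih => simp [ih]; omega

lemma list_all_one : ∀ (l : List ℕ), (∀ x ∈ l, x ≤ 1) →
    (l.sum ≤ l.length ∧ (l.sum = l.length → ∀ x ∈ l, x = 1)) := by
  intro l
  induction l with
  | nil => simp
  | cons a l ih =>
    intro h
    have ha : a ≤ 1 := h a List.mem_cons_self
    have ih' := ih (fun x hx => h x (List.mem_cons_of_mem a hx))
    refine ⟨by simp; omega, ?_⟩
    intro hsum x hx
    simp at hsum
    rcases List.mem_cons.mp hx with rfl | hx
    · omega
    · exact ih'.2 (by omega) x hx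

lemma walk_const {V : Type*} {G : SimpleGraph V} (f : V → ZMod 2) :
    ∀ {a b : V} (q : G.Walk a b), (∀ d ∈ q.darts, f d.fst = f d.snd) → f a = f b := by
  intro a b q
  induction q with
  | nil => intro _; rfl
  | @cons u x b h q ih =>
    intro hd
    have h1 : f u = f x := hd ⟨(u, x), h⟩ List.mem_cons_self
    exact h1.trans (ih (fun d hd' => hd d (List.mem_cons_of_mem _ hd')))

lemma dist_zmod2 {x y d : ℕ} (h : Nat.dist x y = d) :
    (x : ZMod 2) + (y : ZMod 2) = (d : ZMod 2) := by
  have hdd : Nat.dist x y = (x - y) + (y - x) := rfl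
  have h2 : (x + y) % 2 = d % 2 := by omega
  calc (x : ZMod 2) + y = ((x + y : ℕ) : ZMod 2) := by push_cast; ring
    _ = (((x + y) % 2 : ℕ) : ZMod 2) := (ZMod.natCast_mod _ 2).symm
    _ = ((d % 2 : ℕ) : ZMod 2) := by rw [h2]
    _ = (d : ZMod 2) := ZMod.natCast_mod _ 2

lemma char2_eq {a b : ZMod 2} (h : a + b = 0) : a = b := by
  revert h; revert a b; decide

/-- For `2 ≤ r < s`, the `{r,s}`-leaper graph on a `2s × n` board has no
Hamiltonian circuit. -/
theorem leaper_2s_no_hamCycle (r s : ℕ) (hr : 2 ≤ r) (hrs : r < s) :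
    ∀ n : ℕ, ¬ HasHamCycle (leaperGraph r s (2 * s) n) := by
  intro n hham
  obtain ⟨v, w, hw⟩ := hham
  -- unfold the adjacency relation
  have hadj : ∀ {p q : Fin (2 * s) × Fin n}, (leaperGraph r s (2 * s) n).Adj p q →
      ((Nat.dist p.1.val q.1.val = r ∧ Nat.dist p.2.val q.2.val = s) ∨
       (Nat.dist p.1.val q.1.val = s ∧ Nat.dist p.2.val q.2.val = r)) := by
    intro p q h
    rw [leaperGraph, SimpleGraph.fromRel_adj] at h
    rcases h.2 with h' | h'
    · exact h'
    · rw [Nat.dist_comm p.1.val, Nat.dist_comm p.2.val]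
      rcases h' with h' | h'
      · exact Or.inl h'
      · exact Or.inr h'
  -- the walk has at least one dart
  have hnotnil := hw.isCycle.not_nil
  have hpos : 0 < w.length := SimpleGraph.Walk.not_nil_iff_lt_length.mp hnotnil
  have hDne : w.darts ≠ [] := by
    intro h
    have := w.length_darts
    rw [h] at this
    simp at this
    omega
  obtain ⟨d0, hd0⟩ := List.exists_mem_of_ne_nil _ hDne
  -- small boards have no edges at all
  by_cases hn : n < 2
  · have h := hadj d0.adj
    have h1 : d0.fst.2.val < n := d0.fst.2.isLt
    have h2 : d0.snd.2.val < n := d0.snd.2.isLt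
    have hdd : Nat.dist d0.fst.2.val d0.snd.2.val
        = (d0.fst.2.val - d0.snd.2.val) + (d0.snd.2.val - d0.fst.2.val) := rfl
    rcases h with ⟨_, h⟩ | ⟨_, h⟩ <;> omega
  push_neg at hn
  -- a function invariant along the darts of `w` is constant
  have keyconst : ∀ (f : (Fin (2 * s) × Fin n) → ZMod 2),
      (∀ d ∈ w.darts, f d.fst = f d.snd) → ∀ u, f u = f v := by
    intro f hf u
    have hu : u ∈ w.support := hw.mem_support u
    exact (walk_const f (w.takeUntil u hu)
      (fun d hd => hf d (w.darts_takeUntil_subset hu hd))).symm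
  rcases Nat.even_or_odd (r + s) with heven | hodd
  · -- r + s even : the parity of x + y is invariant, contradiction
    have hcast : ((r + s : ℕ) : ZMod 2) = 0 := by
      have h2 : (r + s) % 2 = 0 := Nat.even_iff.mp heven
      rw [← ZMod.natCast_mod, h2]; rfl
    set f : (Fin (2 * s) × Fin n) → ZMod 2 :=
      fun p => (p.1.val : ZMod 2) + (p.2.val : ZMod 2) with hf
    have hflip : ∀ d ∈ w.darts, f d.fst = f d.snd := by
      intro d _
      apply char2_eq
      have hsum : f d.fst + f d.snd
          = ((d.fst.1.val : ZMod 2) + d.snd.1.val)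
            + ((d.fst.2.val : ZMod 2) + d.snd.2.val) := by
        rw [hf]; ring
      rcases hadj d.adj with ⟨e1, e2⟩ | ⟨e1, e2⟩
      · rw [hsum, dist_zmod2 e1, dist_zmod2 e2, ← Nat.cast_add]
        exact hcast
      · rw [hsum, dist_zmod2 e1, dist_zmod2 e2, ← Nat.cast_add, Nat.add_comm s r]
        exact hcast
    have e0 := keyconst f hflip (⟨0, by omega⟩, ⟨0, by omega⟩)
    have e1 := keyconst f hflip (⟨1, by omega⟩, ⟨0, by omega⟩)
    have : f (⟨1, by omega⟩, ⟨0, by omega⟩) = f (⟨0, by omega⟩, ⟨0, by omega⟩) :=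
      e1.trans e0.symm
    rw [hf] at this
    simp at this
  · -- r + s odd : the main argument
    have hcast : ((r + s : ℕ) : ZMod 2) = 1 := by
      have h2 : (r + s) % 2 = 1 := Nat.odd_iff.mp hodd
      rw [← ZMod.natCast_mod, h2]; rfl
    set ν : (Fin (2 * s) × Fin n) → ℕ :=
      fun p => if acol r s p.1.val then 1 else 0 with hν
    -- the tail of the support is a nodup list containing every vertex
    have htail : w.tail.support = w.support.tail :=
      SimpleGraph.Walk.support_tail_of_not_nil w hnotnil
    have hnodupt : w.support.tail.Nodup := hw.isCycle.support_nodup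
    have hmemt : ∀ x, x ∈ w.support.tail := by
      intro x
      have := hw.isHamiltonian_tail.mem_support x
      rwa [htail] at this
    have htofin : w.support.tail.toFinset = Finset.univ := by
      ext x; simp [hmemt]
    -- total weight of all vertices
    have htotal : ∑ p : Fin (2 * s) × Fin n, ν p = s * n := by
      rw [Fintype.sum_prod_type]
      have hx : ∀ x : Fin (2 * s), ∑ y : Fin n, ν (x, y)
          = (if acol r s x.val then 1 else 0 : ℕ) * n := by
        intro x
        by_cases h : acol r s x.val <;> simp [hν, h]
      rw [Finset.sum_congr rfl (fun x _ => hx x), ← Finset.sum_mul]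
      rw [Fin.sum_univ_eq_sum_range (fun x => (if acol r s x then 1 else 0 : ℕ)) (2 * s)]
      rw [sum_acol]
    -- sum of ν over the tail
    have hsum_t : (w.support.tail.map ν).sum = s * n := by
      rw [← List.sum_toFinset ν hnodupt, htofin, ← htotal]
    -- sum of ν over dropLast equals sum over tail
    have hsupc : w.support = v :: w.support.tail := w.support_eq_cons
    have hne : w.support ≠ [] := by rw [hsupc]; simp
    have hlast : w.support.getLast hne = v := w.getLast_support
    have hsum_d : (w.support.dropLast.map ν).sum = s * n := by
      have h1 : (w.support.map ν).sum = (w.support.dropLast.map ν).sum + ν v := by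
        conv_lhs => rw [← List.dropLast_append_getLast hne]
        rw [List.map_append, List.sum_append, hlast]
        simp
      have h2 : (w.support.map ν).sum = ν v + (w.support.tail.map ν).sum := by
        conv_lhs => rw [hsupc]
        rw [List.map_cons, List.sum_cons]
      omega
    -- length of the darts list
    have hdartslen : w.darts.length = 2 * s * n := by
      rw [w.length_darts, hw.length_eq]
      simp [Fintype.card_prod, Fintype.card_fin]
    -- the sum over all darts of endpoint-weights
    have hsum_darts : (w.darts.map (fun d => ν d.fst + ν d.snd)).sum = 2 * s * n := by
      rw [list_sum_map_add (fun d => ν d.fst) (fun d => ν d.snd) w.darts]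
      have hfst : (w.darts.map (fun d => ν d.fst)).sum = (w.support.dropLast.map ν).sum := by
        rw [show (fun d : (leaperGraph r s (2 * s) n).Dart => ν d.fst) = ν ∘ (fun d : (leaperGraph r s (2 * s) n).Dart => d.fst) from rfl,
          ← List.map_map, w.map_fst_darts]
      have hsnd : (w.darts.map (fun d => ν d.snd)).sum = (w.support.tail.map ν).sum := by
        rw [show (fun d : (leaperGraph r s (2 * s) n).Dart => ν d.snd) = ν ∘ (fun d : (leaperGraph r s (2 * s) n).Dart => d.snd) from rfl,
          ← List.map_map, w.map_snd_darts]
      rw [hfst, hsnd, hsum_d, hsum_t]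
      ring
    -- each dart has at most one marked endpoint
    have hle : ∀ x ∈ (w.darts.map (fun d => ν d.fst + ν d.snd)), x ≤ 1 := by
      simp only [List.mem_map]
      rintro x ⟨d, hd, rfl⟩
      simp only [hν]
      split_ifs with h1 h2
      · exfalso
        rcases hadj d.adj with ⟨e1, _⟩ | ⟨e1, _⟩
        · exact acol_not_dist (by omega) hrs d.fst.1.isLt d.snd.1.isLt (Or.inl e1) h1 h2
        · exact acol_not_dist (by omega) hrs d.fst.1.isLt d.snd.1.isLt (Or.inr e1) h1 h2
      all_goals omega
    -- hence each dart has exactly one marked endpoint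
    have hall1 : ∀ d ∈ w.darts, ν d.fst + ν d.snd = 1 := by
      intro d hd
      have := (list_all_one _ hle).2
        (by rw [hsum_darts, List.length_map, hdartslen])
      exact this _ (List.mem_map_of_mem hd)
    -- the combined invariant
    set τ : (Fin (2 * s) × Fin n) → ZMod 2 :=
      fun p => ((p.1.val + p.2.val : ℕ) : ZMod 2) + ((ν p : ℕ) : ZMod 2) with hτ
    have hτflip : ∀ d ∈ w.darts, τ d.fst = τ d.snd := by
      intro d hd
      apply char2_eq
      have h1 : ν d.fst + ν d.snd = 1 := hall1 d hd
      have hsum : τ d.fst + τ d.snd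
          = (((d.fst.1.val : ZMod 2) + d.snd.1.val)
            + ((d.fst.2.val : ZMod 2) + d.snd.2.val))
            + ((ν d.fst + ν d.snd : ℕ) : ZMod 2) := by
        rw [hτ]; push_cast; ring
      rcases hadj d.adj with ⟨e1, e2⟩ | ⟨e1, e2⟩
      · rw [hsum, dist_zmod2 e1, dist_zmod2 e2, h1, ← Nat.cast_add, hcast]
        decide
      · rw [hsum, dist_zmod2 e1, dist_zmod2 e2, h1, ← Nat.cast_add,
          Nat.add_comm s r, hcast]
        decide
    have e0 := keyconst τ hτflip (⟨0, by omega⟩, ⟨0, by omega⟩)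
    have e1 := keyconst τ hτflip (⟨0, by omega⟩, ⟨1, by omega⟩)
    have heq : τ (⟨0, by omega⟩, ⟨1, by omega⟩) = τ (⟨0, by omega⟩, ⟨0, by omega⟩) :=
      e1.trans e0.symm
    rw [hτ, hν] at heq
    simp at heq
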